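/- Every preferred answer set of (P,<) under the fragment-based semantics G is a preferred answer set under the direct-conflict semantics D (i.e., G ⊆ D). -/

import Mathlib

/-- A literal over atoms `A`: `(true, a)` is the atom `a`, `(false, a)` is `¬ a`. -/
abbrev Lit (A : Type) := Bool × A

/-- A rule with head, positive body and negative body. -/
structure Rule (A : Type) where
  head : Lit A
  pos : Set (Lit A)
  neg : Set (Lit A)

variable {A : Type}

/-- Heads of a set of rules. -/
def headSet (R : Set (Rule A)) : Set (Lit A) := Rule.head '' R

/-- `R ⊆ P` positively satisfies `P`. -/
def PosSat (P R : Set (Rule A)) : Prop :=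
  R ⊆ P ∧ ∀ r ∈ P, r.pos ⊆ headSet R → r ∈ R

/-- The minimal set of rules positively satisfying `P`. -/
def MP (P : Set (Rule A)) : Set (Rule A) := ⋂₀ {R | PosSat P R}

/-- A set of rules defeats a rule. -/
def defeatsRule (R : Set (Rule A)) (r : Rule A) : Prop :=
  (headSet R ∩ r.neg).Nonempty

/-- A set of rules defeats a set of rules. -/
def defeatsSet (R₁ R₂ : Set (Rule A)) : Prop := ∃ r ∈ R₂, defeatsRule R₁ r

/-- The reduct `P^R` removes each rule defeated by `R`. -/
def reduct (P R : Set (Rule A)) : Set (Rule A) := {r ∈ P | ¬ defeatsRule R r}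

/-- `R ⊆ P` is a generating set of `P` iff `R = MP (P^R)`. -/
def GenSet (P R : Set (Rule A)) : Prop := R ⊆ P ∧ R = MP (reduct P R)

/-- A set of literals is consistent iff it contains no complementary pair. -/
def Consistent (S : Set (Lit A)) : Prop :=
  ∀ a : A, ¬ (((true, a) ∈ S) ∧ ((false, a) ∈ S))

/-- Answer sets via generating sets. -/
def AnswerSet (P : Set (Rule A)) (S : Set (Lit A)) : Prop :=
  Consistent S ∧ ∃ R, GenSet P R ∧ headSet R = S

/-- `Γ_S(P)`: rules whose positive body is in `S` and negative body disjoint from `S`. -/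
def Gamma (S : Set (Lit A)) (P : Set (Rule A)) : Set (Rule A) :=
  {r ∈ P | r.pos ⊆ S ∧ r.neg ∩ S = ∅}

/-- Fragments of a program. -/
def Frag (P : Set (Rule A)) : Set (Set (Rule A)) := {R | R ⊆ P ∧ MP R = R}

/-- Fragment reduct: remove fragments defeated by a member of `E`. -/
def fragReduct (P : Set (Rule A)) (E : Set (Set (Rule A))) : Set (Set (Rule A)) :=
  {X ∈ Frag P | ¬ ∃ Y ∈ E, defeatsSet Y X}

/-- Stable fragment sets. -/
def StableFragSet (P : Set (Rule A)) (E : Set (Set (Rule A))) : Prop :=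
  E ⊆ Frag P ∧ fragReduct P E = E

/-- Mutually defeating (conflicting) sets of rules. -/
def Conflicting (X Y : Set (Rule A)) : Prop := defeatsSet X Y ∧ defeatsSet Y X

/-- `X` overrides `Y` w.r.t. the preference relation `lt`. -/
def Overrides (lt : Rule A → Rule A → Prop) (X Y : Set (Rule A)) : Prop :=
  Conflicting X Y ∧
    ∀ r₁ ∈ X, defeatsRule Y r₁ → ∃ r₂ ∈ Y, defeatsRule X r₂ ∧ lt r₂ r₁

/-- Preferred fragment reduct (semantics G). -/
def prefFragReduct (lt : Rule A → Rule A → Prop) (P : Set (Rule A))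
    (E : Set (Set (Rule A))) : Set (Set (Rule A)) :=
  {X ∈ Frag P | ¬ ∃ Y ∈ E, defeatsSet Y X ∧ ¬ Overrides lt X Y}

/-- Preferred stable fragment sets (semantics G). -/
def PrefStableFragSet (lt : Rule A → Rule A → Prop) (P : Set (Rule A))
    (E : Set (Set (Rule A))) : Prop :=
  E ⊆ Frag P ∧ prefFragReduct lt P E = E

/-- Preferred answer sets under the fragment-based semantics G. -/
def GPrefAnswerSet (lt : Rule A → Rule A → Prop) (P : Set (Rule A))
    (S : Set (Lit A)) : Prop :=
  Consistent S ∧ ∃ E, PrefStableFragSet lt P E ∧ headSet (⋃₀ E) = S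

/-- `T(r,R)` for semantics GNO. -/
def Trules (lt : Rule A → Rule A → Prop) (r : Rule A) (R : Set (Rule A)) :
    Set (Rule A) :=
  MP {p ∈ R | ¬ lt p r}

/-- GNO reduct: remove rules `r` with `body⁻(r) ∩ head(T(r,R)) ≠ ∅`. -/
def gnoReduct (lt : Rule A → Rule A → Prop) (P R : Set (Rule A)) : Set (Rule A) :=
  {r ∈ P | ¬ (r.neg ∩ headSet (Trules lt r R)).Nonempty}

/-- GNO-preferred generating sets. -/
def GNOPrefGen (lt : Rule A → Rule A → Prop) (P R : Set (Rule A)) : Prop :=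
  GenSet P R ∧ R = MP (gnoReduct lt P R)

/-- GNO-preferred answer sets. -/
def GNOPrefAnswerSet (lt : Rule A → Rule A → Prop) (P : Set (Rule A))
    (S : Set (Lit A)) : Prop :=
  Consistent S ∧ ∃ R, GNOPrefGen lt P R ∧ headSet R = S

/-- A rule defeats a rule. -/
def defeats (r₁ r₂ : Rule A) : Prop := r₁.head ∈ r₂.neg

/-- `r₁` directly overrides `r₂` w.r.t. `lt`. -/
def DirOverrides (lt : Rule A → Rule A → Prop) (r₁ r₂ : Rule A) : Prop :=
  (defeats r₁ r₂ ∧ defeats r₂ r₁) ∧ lt r₂ r₁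

/-- D-reduct for the direct-conflict semantics. -/
def dReduct (lt : Rule A → Rule A → Prop) (P R : Set (Rule A)) : Set (Rule A) :=
  {r₁ ∈ P | ¬ ∃ r₂ ∈ R, defeats r₂ r₁ ∧ ¬ DirOverrides lt r₁ r₂}

/-- D-preferred generating sets. -/
def DPrefGen (lt : Rule A → Rule A → Prop) (P R : Set (Rule A)) : Prop :=
  R = MP (dReduct lt P R)

/-- D-preferred answer sets. -/
def DPrefAnswerSet (lt : Rule A → Rule A → Prop) (P : Set (Rule A))
    (S : Set (Lit A)) : Prop :=
  Consistent S ∧ ∃ R, DPrefGen lt P R ∧ headSet R = S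

/-- Stratified programs. -/
def Stratified (P : Set (Rule A)) : Prop :=
  ∃ lam : Lit A → ℕ, ∀ r ∈ P,
    (∀ l ∈ r.pos, lam l ≤ lam r.head) ∧ (∀ l ∈ r.neg, lam l < lam r.head)


/-- Auxiliary lemmas about `MP`. -/
lemma posSat_self (Q : Set (Rule A)) : PosSat Q Q := ⟨subset_rfl, fun r hr _ => hr⟩

lemma MP_subset (Q : Set (Rule A)) : MP Q ⊆ Q :=
  Set.sInter_subset_of_mem (posSat_self Q)

lemma posSat_MP (Q : Set (Rule A)) : PosSat Q (MP Q) := by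
  refine ⟨MP_subset Q, fun r hr hpos => ?_⟩
  intro R' hR'
  have hsub : MP Q ⊆ R' := Set.sInter_subset_of_mem hR'
  exact hR'.2 r hr (hpos.trans (Set.image_mono hsub))

lemma MP_mono {Q Q' : Set (Rule A)} (h : Q ⊆ Q') : MP Q ⊆ MP Q' := by
  have hps : PosSat Q (MP Q' ∩ Q) := by
    refine ⟨Set.inter_subset_right, fun r hr hpos => ?_⟩
    have : r.pos ⊆ headSet (MP Q') :=
      hpos.trans (Set.image_mono Set.inter_subset_left)
    exact ⟨(posSat_MP Q').2 r (h hr) this, hr⟩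
  exact (Set.sInter_subset_of_mem hps).trans Set.inter_subset_left

/-- G ⊆ D. -/
theorem g_subset_d (P : Set (Rule A)) (hP : P.Finite)
    (lt : Rule A → Rule A → Prop) (htrans : Transitive lt)
    (hasymm : ∀ r₁ r₂, lt r₁ r₂ → ¬ lt r₂ r₁)
    (S : Set (Lit A)) (h : GPrefAnswerSet lt P S) :
    DPrefAnswerSet lt P S := by
  obtain ⟨hcons, E, ⟨hEfrag, hEfix⟩, hhead⟩ := h
  -- irreflexivity of lt
  have hirr : ∀ r, ¬ lt r r := fun r hr => hasymm r r hr hr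
  -- membership characterization of E
  have hmem : ∀ X, X ∈ E ↔
      X ∈ Frag P ∧ ¬ ∃ Y ∈ E, defeatsSet Y X ∧ ¬ Overrides lt X Y := by
    intro X
    conv_lhs => rw [← hEfix]
    exact Iff.rfl
  set R : Set (Rule A) := ⋃₀ E with hR
  have hRP : R ⊆ P := by
    intro r hr
    obtain ⟨X, hXE, hrX⟩ := hr
    exact (hEfrag hXE).1 hrX
  -- no infinite descent helper
  have hdescent : ∀ T : Set (Rule A), T ⊆ P → T.Nonempty →
      (∀ r ∈ T, ∃ r' ∈ T, lt r' r) → False := by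
    intro T hTP hTne hstep
    letI : IsIrrefl (Rule A) lt := ⟨hirr⟩
    letI : IsTrans (Rule A) lt := ⟨fun _ _ _ hab hbc => htrans hab hbc⟩
    letI : IsStrictOrder (Rule A) lt := {}
    have hTfin : T.Finite := hP.subset hTP
    have hwf : T.WellFoundedOn lt := hTfin.wellFoundedOn
    obtain ⟨r₀, hr₀⟩ := hTne
    obtain ⟨m, -, hmin⟩ := hwf.has_min Set.univ ⟨⟨r₀, hr₀⟩, trivial⟩
    obtain ⟨r', hr', hlt⟩ := hstep m m.2
    exact hmin ⟨r', hr'⟩ trivial hlt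
  -- Lemma B : no fragment in E defeats another fragment in E
  have hB : ∀ X ∈ E, ∀ Y ∈ E, ¬ defeatsSet Y X := by
    intro X hX Y hY hdef
    have hXY : Overrides lt X Y := by
      by_contra hc
      exact ((hmem X).mp hX).2 ⟨Y, hY, hdef, hc⟩
    have hYX : Overrides lt Y X := by
      by_contra hc
      exact ((hmem Y).mp hY).2 ⟨X, hX, hXY.1.1, hc⟩
    set T : Set (Rule A) :=
      {r | (r ∈ X ∧ defeatsRule Y r) ∨ (r ∈ Y ∧ defeatsRule X r)} with hT
    have hTP : T ⊆ P := by
      rintro r (⟨hrX, -⟩ | ⟨hrY, -⟩)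
      · exact (hEfrag hX).1 hrX
      · exact (hEfrag hY).1 hrY
    obtain ⟨r₁, hr₁X, hr₁def⟩ := hdef
    have hTne : T.Nonempty := ⟨r₁, Or.inl ⟨hr₁X, hr₁def⟩⟩
    refine hdescent T hTP hTne ?_
    rintro r (⟨hrX, hrdef⟩ | ⟨hrY, hrdef⟩)
    · obtain ⟨r₂, hr₂Y, hr₂def, hlt⟩ := hXY.2 r hrX hrdef
      exact ⟨r₂, Or.inr ⟨hr₂Y, hr₂def⟩, hlt⟩
    · obtain ⟨r₂, hr₂X, hr₂def, hlt⟩ := hYX.2 r hrY hrdef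
      exact ⟨r₂, Or.inl ⟨hr₂X, hr₂def⟩, hlt⟩
  -- rules of R are not defeated by R
  have hRundef : ∀ r ∈ R, ¬ defeatsRule R r := by
    rintro r ⟨X, hXE, hrX⟩ ⟨l, ⟨r₂, hr₂R, hr₂head⟩, hlneg⟩
    obtain ⟨Y, hYE, hr₂Y⟩ := hr₂R
    exact hB X hXE Y hYE ⟨r, hrX, l, ⟨r₂, hr₂Y, hr₂head⟩, hlneg⟩
  -- R is contained in the D-reduct
  have hRD : R ⊆ dReduct lt P R := by
    intro r hr
    refine ⟨hRP hr, ?_⟩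
    rintro ⟨r₂, hr₂R, hdef, -⟩
    exact hRundef r hr ⟨r₂.head, ⟨r₂, hr₂R, rfl⟩, hdef⟩
  -- closure: every rule of the D-reduct whose positive body holds is in R
  have hclosed : ∀ r ∈ dReduct lt P R, r.pos ⊆ headSet R → r ∈ R := by
    rintro r ⟨hrP, hnot⟩ hpos
    push_neg at hnot
    -- every r₂ ∈ R defeating r is directly overridden by r
    have hdir : ∀ r₂ ∈ R, defeats r₂ r → DirOverrides lt r r₂ := by
      intro r₂ hr₂ hdf
      by_contra hc
      exact hc (hnot r₂ hr₂ hdf)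
    -- the set X = insert r R is a fragment of P
    set X : Set (Rule A) := insert r R with hXdef
    have hXP : X ⊆ P := Set.insert_subset hrP hRP
    have hRMPX : R ⊆ MP X := by
      intro s hs
      obtain ⟨X₀, hX₀E, hsX₀⟩ := hs
      have h1 : X₀ ⊆ X := fun t ht =>
        Set.mem_insert_of_mem r ⟨X₀, hX₀E, ht⟩
      have := MP_mono h1
      rw [(hEfrag hX₀E).2] at this
      exact this hsX₀
    have hrMPX : r ∈ MP X := by
      refine (posSat_MP X).2 r (Set.mem_insert r R) ?_
      intro l hl
      obtain ⟨s, hsR, hshead⟩ := hpos hl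
      exact ⟨s, hRMPX hsR, hshead⟩
    have hXfrag : X ∈ Frag P := by
      refine ⟨hXP, Set.Subset.antisymm (MP_subset X) ?_⟩
      intro s hs
      rcases Set.mem_insert_iff.mp hs with h1 | h1
      · rw [h1]; exact hrMPX
      · exact hRMPX h1
    -- show X ∈ E
    have hXE : X ∈ E := by
      rw [hmem]
      refine ⟨hXfrag, ?_⟩
      rintro ⟨Y, hYE, hYdef, hnov⟩
      have hYR : Y ⊆ R := fun t ht => ⟨Y, hYE, ht⟩
      -- any rule of X defeated by Y must be r itself
      have honly : ∀ s ∈ X, defeatsRule Y s → s = r := by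
        rintro s hs hds
        rcases Set.mem_insert_iff.mp hs with h1 | h1
        · exact h1
        · exfalso
          obtain ⟨l, ⟨t, htY, hthead⟩, hlneg⟩ := hds
          exact hRundef s h1 ⟨l, ⟨t, hYR htY, hthead⟩, hlneg⟩
      -- for each y ∈ Y with head in r.neg we get DirOverrides
      have hwit : ∀ y ∈ Y, y.head ∈ r.neg →
          defeatsRule X y ∧ lt y r := by
        intro y hyY hyh
        have hdo := hdir y (hYR hyY) hyh
        obtain ⟨⟨hd1, hd2⟩, hlt⟩ := hdo
        exact ⟨⟨r.head, ⟨r, Set.mem_insert r R, rfl⟩, hd1⟩, hlt⟩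
      apply hnov
      -- Y defeats r (the only possible target)
      obtain ⟨s, hsX, hsdef⟩ := hYdef
      have hs_r := honly s hsX hsdef
      subst hs_r
      obtain ⟨l, ⟨y, hyY, hyhead⟩, hlneg⟩ := hsdef
      have hy := hwit y hyY (hyhead ▸ hlneg)
      constructor
      · exact ⟨⟨y, hyY, hy.1⟩, ⟨s, hsX, l, ⟨y, hyY, hyhead⟩, hlneg⟩⟩
      · intro r₁ hr₁X hr₁def
        have := honly r₁ hr₁X hr₁def
        subst this
        obtain ⟨l', ⟨y', hy'Y, hy'head⟩, hl'neg⟩ := hr₁def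
        have hy' := hwit y' hy'Y (hy'head ▸ hl'neg)
        exact ⟨y', hy'Y, hy'.1, hy'.2⟩
    exact ⟨X, hXE, Set.mem_insert r R⟩
  -- conclude
  refine ⟨hcons, R, ?_, hhead⟩
  have hps : PosSat (dReduct lt P R) R := ⟨hRD, hclosed⟩
  apply Set.Subset.antisymm
  · intro s hs
    obtain ⟨X₀, hX₀E, hsX₀⟩ := hs
    have h1 : X₀ ⊆ dReduct lt P R := fun t ht => hRD ⟨X₀, hX₀E, ht⟩
    have := MP_mono h1
    rw [(hEfrag hX₀E).2] at this
    exact this hsX₀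
  · exact Set.sInter_subset_of_mem hps
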